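/- arXiv:2112.10289 — 2 statements merged into one kernel-verified Lean document; each statement's English description precedes it below -/
import Mathlib

section
/- For every n ≥ 4 and every natural number c with 2c > n, there is no irreducible meandric permutation of {1,…,n} with exactly c cups, i.e., M^{Irr}_{n,c} = 0 whenever c > n/2. -/
namespace MeanderFormal

/-- The normalized chord with endpoints `a` and `b`. -/
def chord (a b : ℕ) : ℕ × ℕ := (min a b, max a b)

/-- Two normalized chords `{p.1,p.2}` and `{q.1,q.2}` cross. -/
def Cross (p q : ℕ × ℕ) : Prop :=
  (p.1 < q.1 ∧ q.1 < p.2 ∧ p.2 < q.2) ∨ (q.1 < p.1 ∧ p.1 < q.2 ∧ q.2 < p.2)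

/-- A system of chords is pairwise noncrossing. -/
def Noncrossing (S : Set (ℕ × ℕ)) : Prop :=
  ∀ p ∈ S, ∀ q ∈ S, ¬ Cross p q

/-- One-indexed value sequence of a permutation of `Fin n`:
`val σ k = a_k ∈ {1,…,n}` for `1 ≤ k ≤ n`, and `0` otherwise. -/
def val {n : ℕ} (σ : Equiv.Perm (Fin n)) (k : ℕ) : ℕ :=
  if h : 1 ≤ k ∧ k ≤ n then ((σ ⟨k - 1, by omega⟩ : Fin n) : ℕ) + 1 else 0

/-- The upper chord system of a permutation, on the points `{0,1,…,n+1}`. -/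
def upperChords {n : ℕ} (σ : Equiv.Perm (Fin n)) : Set (ℕ × ℕ) :=
  {chord 0 (val σ 1)}
    ∪ {c | ∃ k, 1 ≤ k ∧ 2 * k < n ∧ c = chord (val σ (2 * k)) (val σ (2 * k + 1))}
    ∪ {c | n % 2 = 0 ∧ c = chord (val σ n) (n + 1)}

/-- The lower chord system of a permutation, on the points `{0,1,…,n+1}`. -/
def lowerChords {n : ℕ} (σ : Equiv.Perm (Fin n)) : Set (ℕ × ℕ) :=
  {c | ∃ k, 1 ≤ k ∧ 2 * k ≤ n ∧ c = chord (val σ (2 * k - 1)) (val σ (2 * k))}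
    ∪ {c | n % 2 = 1 ∧ c = chord (val σ n) (n + 1)}

/-- `σ` is a meandric permutation. -/
def IsMeandric {n : ℕ} (σ : Equiv.Perm (Fin n)) : Prop :=
  Noncrossing (upperChords σ) ∧ Noncrossing (lowerChords σ)

/-- A set of naturals is an interval of consecutive integers. -/
def IsInterval (S : Set ℕ) : Prop :=
  ∀ x ∈ S, ∀ y ∈ S, ∀ z, x ≤ z → z ≤ y → z ∈ S

/-- A double interval of `σ`: a nonempty interval `S ⊆ {1,…,n}` whose set of
positions (preimage) is also an interval. -/
def IsDoubleInterval {n : ℕ} (σ : Equiv.Perm (Fin n)) (S : Set ℕ) : Prop :=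
  S.Nonempty ∧ S ⊆ Set.Icc 1 n ∧ IsInterval S ∧
    IsInterval {k | k ∈ Set.Icc 1 n ∧ val σ k ∈ S}

/-- `σ` is irreducible: no double interval of width `w` with `2 < w < n`. -/
def IsIrreducible {n : ℕ} (σ : Equiv.Perm (Fin n)) : Prop :=
  ¬ ∃ S : Set ℕ, IsDoubleInterval σ S ∧ 2 < S.ncard ∧ S.ncard < n

/-- A cup of `σ`: a double interval of width 2. -/
def IsCup {n : ℕ} (σ : Equiv.Perm (Fin n)) (S : Set ℕ) : Prop :=
  IsDoubleInterval σ S ∧ S.ncard = 2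

/-- The number of cups of `σ`. -/
noncomputable def cupCount {n : ℕ} (σ : Equiv.Perm (Fin n)) : ℕ :=
  Set.ncard {S : Set ℕ | IsCup σ S}

/-- `S₁` is covered by `S₂` among the double intervals of `σ`. -/
def Covers {n : ℕ} (σ : Equiv.Perm (Fin n)) (S₁ S₂ : Set ℕ) : Prop :=
  S₁ ⊂ S₂ ∧ ¬ ∃ S' : Set ℕ, IsDoubleInterval σ S' ∧ S₁ ⊂ S' ∧ S' ⊂ S₂

/-- The decomposition graph of `σ`: vertices are double intervals, adjacency is
the covering relation (in either direction). -/
def decompGraph {n : ℕ} (σ : Equiv.Perm (Fin n)) :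
    SimpleGraph {S : Set ℕ // IsDoubleInterval σ S} where
  Adj A B := Covers σ A.1 B.1 ∨ Covers σ B.1 A.1
  symm := ⟨fun A B h => Or.symm h⟩
  loopless := ⟨by
    intro A h
    rcases h with h | h <;> exact h.1.ne rfl⟩

/-- `v` is an articulation point of `G`: deleting it increases the number of
connected components. -/
def IsArticulationPoint {V : Type*} (G : SimpleGraph V) (v : V) : Prop :=
  Nat.card G.ConnectedComponent <
    Nat.card ((G.induce {u : V | u ≠ v}).ConnectedComponent)

/-- A snake: a meandric permutation whose decomposition graph has no
articulation point. -/
def IsSnake {n : ℕ} (σ : Equiv.Perm (Fin n)) : Prop :=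
  IsMeandric σ ∧ ∀ v, ¬ IsArticulationPoint (decompGraph σ) v

/-- The reversal permutation `(n, n-1, …, 1)`. -/
def reversalPerm (n : ℕ) : Equiv.Perm (Fin n) :=
  ⟨Fin.rev, Fin.rev, Fin.rev_rev, Fin.rev_rev⟩

/-- The number `M_n` of meandric permutations of `{1,…,n}`. -/
noncomputable def meanderCount (n : ℕ) : ℕ :=
  Nat.card {σ : Equiv.Perm (Fin n) // IsMeandric σ}

/-- The number of snakes of order `n`. -/
noncomputable def snakeCount (n : ℕ) : ℕ :=
  Nat.card {σ : Equiv.Perm (Fin n) // IsSnake σ}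

/-- The number `M^{Irr}_n` of irreducible meandric permutations of `{1,…,n}`. -/
noncomputable def irrCount (n : ℕ) : ℕ :=
  Nat.card {σ : Equiv.Perm (Fin n) // IsMeandric σ ∧ IsIrreducible σ}

/-- The number `M^{Irr}_{n,c}` of irreducible meandric permutations of `{1,…,n}`
with exactly `c` cups. -/
noncomputable def irrCupCount (n c : ℕ) : ℕ :=
  Nat.card {σ : Equiv.Perm (Fin n) // IsMeandric σ ∧ IsIrreducible σ ∧ cupCount σ = c}


/-- Every cup has the form `{i, i+1}` with `1 ≤ i` and `i+1 ≤ n`. -/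
lemma cup_shape {n : ℕ} {σ : Equiv.Perm (Fin n)} {S : Set ℕ} (h : IsCup σ S) :
    ∃ i, 1 ≤ i ∧ i + 1 ≤ n ∧ S = {i, i + 1} := by
  obtain ⟨⟨hne, hsub, hint, _⟩, h2⟩ := h
  obtain ⟨x, y, hxy, rfl⟩ := Set.ncard_eq_two.mp h2
  have hx1 : x ∈ Set.Icc 1 n := hsub (by simp)
  have hy1 : y ∈ Set.Icc 1 n := hsub (by simp)
  simp only [Set.mem_Icc] at hx1 hy1
  rcases lt_or_gt_of_ne hxy with hlt | hlt
  · have hy : y = x + 1 := by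
      by_contra hne'
      have : x + 1 ∈ ({x, y} : Set ℕ) :=
        hint x (by simp) y (by simp) (x + 1) (by omega) (by omega)
      simp only [Set.mem_insert_iff, Set.mem_singleton_iff] at this
      omega
    exact ⟨x, hx1.1, by omega, by rw [hy]⟩
  · have hx : x = y + 1 := by
      by_contra hne'
      have : y + 1 ∈ ({x, y} : Set ℕ) :=
        hint y (by simp) x (by simp) (y + 1) (by omega) (by omega)
      simp only [Set.mem_insert_iff, Set.mem_singleton_iff] at this
      omega
    exact ⟨y, hy1.1, by omega, by rw [hx, Set.pair_comm]⟩

/-- Two adjacent cups merge to a double interval of width 3. -/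
lemma adjacent_cups {n : ℕ} {σ : Equiv.Perm (Fin n)} {i : ℕ}
    (h1 : IsCup σ {i, i + 1}) (h2 : IsCup σ {i + 1, i + 2}) :
    IsDoubleInterval σ (Set.Icc i (i + 2)) ∧ (Set.Icc i (i + 2)).ncard = 3 := by
  have hi1 : 1 ≤ i := by
    have := h1.1.2.1 (show i ∈ ({i, i + 1} : Set ℕ) by simp)
    exact (Set.mem_Icc.mp this).1
  have hi2 : i + 2 ≤ n := by
    have := h2.1.2.1 (show i + 2 ∈ ({i + 1, i + 2} : Set ℕ) by simp)
    exact (Set.mem_Icc.mp this).2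
  have hP1 : IsInterval {k | k ∈ Set.Icc 1 n ∧ val σ k ∈ ({i, i + 1} : Set ℕ)} :=
    h1.1.2.2.2
  have hP2 : IsInterval {k | k ∈ Set.Icc 1 n ∧ val σ k ∈ ({i + 1, i + 2} : Set ℕ)} :=
    h2.1.2.2.2
  -- common point k₀ with value i+1
  have hilt : i < n := by omega
  set m : Fin n := σ.symm ⟨i, hilt⟩ with hm
  have hval : val σ ((m : ℕ) + 1) = i + 1 := by
    have hcond : 1 ≤ (m : ℕ) + 1 ∧ (m : ℕ) + 1 ≤ n := ⟨by omega, by omega⟩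
    rw [val, dif_pos hcond]
    have : (⟨(m : ℕ) + 1 - 1, by omega⟩ : Fin n) = m := by
      apply Fin.ext; simp
    rw [this, hm, Equiv.apply_symm_apply]
  have hmlt : (m : ℕ) < n := m.isLt
  have hk0mem : (m : ℕ) + 1 ∈ Set.Icc 1 n := Set.mem_Icc.mpr ⟨by omega, by omega⟩
  have hk01 : (m : ℕ) + 1 ∈ {k | k ∈ Set.Icc 1 n ∧ val σ k ∈ ({i, i + 1} : Set ℕ)} :=
    ⟨hk0mem, by rw [hval]; simp⟩
  have hk02 : (m : ℕ) + 1 ∈ {k | k ∈ Set.Icc 1 n ∧ val σ k ∈ ({i + 1, i + 2} : Set ℕ)} :=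
    ⟨hk0mem, by rw [hval]; simp⟩
  have hmemiff : ∀ k, (k ∈ Set.Icc 1 n ∧ val σ k ∈ Set.Icc i (i + 2)) ↔
      (k ∈ {k | k ∈ Set.Icc 1 n ∧ val σ k ∈ ({i, i + 1} : Set ℕ)} ∨
       k ∈ {k | k ∈ Set.Icc 1 n ∧ val σ k ∈ ({i + 1, i + 2} : Set ℕ)}) := by
    intro k
    simp only [Set.mem_setOf_eq, Set.mem_Icc, Set.mem_insert_iff, Set.mem_singleton_iff]
    omega
  refine ⟨⟨⟨i, Set.mem_Icc.mpr ⟨le_refl i, by omega⟩⟩,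
      fun x hx => Set.mem_Icc.mpr ⟨by have := (Set.mem_Icc.mp hx).1; omega, by
        have := (Set.mem_Icc.mp hx).2; omega⟩,
      fun x hx y hy z hz1 hz2 => Set.mem_Icc.mpr ⟨le_trans (Set.mem_Icc.mp hx).1 hz1,
        le_trans hz2 (Set.mem_Icc.mp hy).2⟩, ?_⟩, ?_⟩
  · -- preimage is an interval
    intro x hx y hy z hz1 hz2
    simp only [Set.mem_setOf_eq] at hx hy ⊢
    rw [hmemiff] at hx hy ⊢
    rcases hx with hx | hx <;> rcases hy with hy | hy
    · exact Or.inl (hP1 x hx y hy z hz1 hz2)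
    · rcases le_total z ((m : ℕ) + 1) with hle | hle
      · exact Or.inl (hP1 x hx _ hk01 z hz1 hle)
      · exact Or.inr (hP2 _ hk02 y hy z hle hz2)
    · rcases le_total z ((m : ℕ) + 1) with hle | hle
      · exact Or.inr (hP2 x hx _ hk02 z hz1 hle)
      · exact Or.inl (hP1 _ hk01 y hy z hle hz2)
    · exact Or.inr (hP2 x hx y hy z hz1 hz2)
  · -- cardinality 3
    have : Set.Icc i (i + 2) = ({i, i + 1, i + 2} : Set ℕ) := by
      ext x; simp only [Set.mem_Icc, Set.mem_insert_iff, Set.mem_singleton_iff]; omega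
    rw [this]
    exact Set.ncard_eq_three.mpr ⟨i, i + 1, i + 2, by omega, by omega, by omega, rfl⟩

/-- For every `n ≥ 4` and every `c` with `2c > n`, there is no
irreducible meandric permutation of `{1,…,n}` with exactly `c` cups. -/
theorem irrCupCount_eq_zero (n c : ℕ) (hn : 4 ≤ n) (hc : n < 2 * c) :
    irrCupCount n c = 0 := by
  rw [irrCupCount, Nat.card_eq_zero]
  left
  constructor
  rintro ⟨σ, hm, hirr, hcup⟩
  classical
  set T : Finset ℕ := (Finset.Icc 1 n).filter (fun i => IsCup σ ({i, i + 1} : Set ℕ))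
    with hT
  -- the set of cups is the image of T
  have hset : {S : Set ℕ | IsCup σ S} = (fun i => ({i, i + 1} : Set ℕ)) '' (T : Set ℕ) := by
    ext S
    simp only [Set.mem_setOf_eq, Set.mem_image, Finset.coe_filter, Finset.mem_Icc, hT,
      Set.mem_setOf_eq]
    constructor
    · intro hS
      obtain ⟨i, h1, h2, rfl⟩ := cup_shape hS
      exact ⟨i, ⟨⟨h1, by omega⟩, hS⟩, rfl⟩
    · rintro ⟨i, ⟨_, hcupi⟩, rfl⟩; exact hcupi
  have hinj : Set.InjOn (fun i => ({i, i + 1} : Set ℕ)) (T : Set ℕ) := by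
    intro a _ b _ hab
    have hab' : ({a, a + 1} : Set ℕ) = {b, b + 1} := hab
    have ha : a ∈ ({b, b + 1} : Set ℕ) := by
      rw [← hab']; simp
    have hb : b ∈ ({a, a + 1} : Set ℕ) := by
      rw [hab']; simp
    simp only [Set.mem_insert_iff, Set.mem_singleton_iff] at ha hb
    omega
  have hcard : cupCount σ = T.card := by
    rw [cupCount, hset, Set.ncard_image_of_injOn hinj, Set.ncard_coe_finset]
  -- no two consecutive elements of T
  have hnocons : ∀ i ∈ T, i + 1 ∉ T := by
    intro i hi hi1
    rw [hT, Finset.mem_filter] at hi hi1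
    obtain ⟨hdi, hncard⟩ := adjacent_cups hi.2 hi1.2
    exact hirr ⟨Set.Icc i (i + 2), hdi, by omega, by omega⟩
  -- pigeonhole
  have hinj1 : Function.Injective (· + 1 : ℕ → ℕ) := fun a b h => Nat.add_right_cancel h
  have hdisj : Disjoint T (T.image (· + 1)) := by
    rw [Finset.disjoint_left]
    intro x hx hx'
    obtain ⟨j, hj, hjx⟩ := Finset.mem_image.mp hx'
    exact hnocons j hj (by rw [hjx]; exact hx)
  have hsub : T ∪ T.image (· + 1) ⊆ Finset.Icc 1 n := by
    intro x hx
    rcases Finset.mem_union.mp hx with hx | hx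
    · exact Finset.mem_of_mem_filter x hx
    · obtain ⟨j, hj, hjx⟩ := Finset.mem_image.mp hx
      rw [hT, Finset.mem_filter] at hj
      have hj2 : j + 1 ≤ n := by
        have := hj.2.1.2.1 (show j + 1 ∈ ({j, j + 1} : Set ℕ) by simp)
        exact (Set.mem_Icc.mp this).2
      have hj1 : 1 ≤ j := (Finset.mem_Icc.mp hj.1).1
      have hjx' : j + 1 = x := hjx
      exact Finset.mem_Icc.mpr ⟨by omega, by omega⟩
  have hle : (T ∪ T.image (· + 1)).card ≤ n := by
    have := Finset.card_le_card hsub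
    rwa [Nat.card_Icc, Nat.add_sub_cancel] at this
  rw [Finset.card_union_of_disjoint hdisj, Finset.card_image_of_injective _ hinj1] at hle
  omega

end MeanderFormal
end

section
/- For every n with 4 ≤ n ≤ 7, there is no irreducible meandric permutation of {1,…,n}, i.e., M^{Irr}_n = 0 for n = 4, 5, 6, 7. -/
namespace MeanderFormal

/-! ### Decidable checks -/

def uL (n : ℕ) (v : ℕ → ℕ) : List (ℕ × ℕ) :=
  chord 0 (v 1) ::
    (((List.range n).filterMap fun k =>
        if 1 ≤ k ∧ 2 * k < n then some (chord (v (2 * k)) (v (2 * k + 1))) else none)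
      ++ (if n % 2 = 0 then [chord (v n) (n + 1)] else []))

def lL (n : ℕ) (v : ℕ → ℕ) : List (ℕ × ℕ) :=
  ((List.range (n + 1)).filterMap fun k =>
      if 1 ≤ k ∧ 2 * k ≤ n then some (chord (v (2 * k - 1)) (v (2 * k))) else none)
    ++ (if n % 2 = 1 then [chord (v n) (n + 1)] else [])

instance instDecCross (p q : ℕ × ℕ) : Decidable (Cross p q) := by
  unfold Cross; infer_instance

def anyCross (L : List (ℕ × ℕ)) : Bool :=
  L.any fun p => L.any fun q => decide (Cross p q)

def inP (n : ℕ) (v : ℕ → ℕ) (a b k : ℕ) : Bool :=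
  decide (1 ≤ k ∧ k ≤ n ∧ a ≤ v k ∧ v k ≤ b)

def intervalOK (n : ℕ) (v : ℕ → ℕ) (a b : ℕ) : Bool :=
  decide (1 ≤ a ∧ a ≤ b ∧ b ≤ n ∧ 2 < b + 1 - a ∧ b + 1 - a < n) &&
  ((List.range (n + 1)).all fun x => (List.range (n + 1)).all fun y =>
    (List.range (n + 1)).all fun z =>
      !(inP n v a b x && inP n v a b y && decide (x ≤ z ∧ z ≤ y)) || inP n v a b z)

def hasInterval (n : ℕ) (v : ℕ → ℕ) : Bool :=
  (List.range (n + 1)).any fun a => (List.range (n + 1)).any fun b => intervalOK n v a b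

def bad (n : ℕ) (v : ℕ → ℕ) : Bool :=
  anyCross (uL n v) || anyCross (lL n v) || hasInterval n v

def valL (n : ℕ) (l : List ℕ) (k : ℕ) : ℕ :=
  if 1 ≤ k ∧ k ≤ n then l.getD (k - 1) 0 else 0

abbrev keyH (n a : ℕ) : Prop :=
  ((((List.range n).map (· + 1)).erase a).permutations').all
    (fun t => bad n (valL n (a :: t))) = true

/-! ### Bridges -/

lemma mem_uL {n : ℕ} (σ : Equiv.Perm (Fin n)) :
    ∀ c ∈ uL n (val σ), c ∈ upperChords σ := by
  intro c hc
  rcases List.mem_cons.mp hc with h | h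
  · exact Or.inl (Or.inl h)
  rcases List.mem_append.mp h with h | h
  · rcases List.mem_filterMap.mp h with ⟨k, _, hk⟩
    split at hk
    · next hcond =>
      exact Or.inl (Or.inr ⟨k, hcond.1, hcond.2, (Option.some_inj.mp hk).symm⟩)
    · exact absurd hk (by simp)
  · split at h
    · next hcond =>
      rcases List.mem_singleton.mp h with rfl
      exact Or.inr ⟨hcond, rfl⟩
    · exact absurd h (by simp)

lemma mem_lL {n : ℕ} (σ : Equiv.Perm (Fin n)) :
    ∀ c ∈ lL n (val σ), c ∈ lowerChords σ := by
  intro c hc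
  rcases List.mem_append.mp hc with h | h
  · rcases List.mem_filterMap.mp h with ⟨k, _, hk⟩
    split at hk
    · next hcond =>
      exact Or.inl ⟨k, hcond.1, hcond.2, (Option.some_inj.mp hk).symm⟩
    · exact absurd hk (by simp)
  · split at h
    · next hcond =>
      rcases List.mem_singleton.mp h with rfl
      exact Or.inr ⟨hcond, rfl⟩
    · exact absurd h (by simp)

lemma not_noncross_of_anyCross {S : Set (ℕ × ℕ)} {L : List (ℕ × ℕ)}
    (hsub : ∀ c ∈ L, c ∈ S) (h : anyCross L = true) : ¬ Noncrossing S := by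
  rcases List.any_eq_true.mp h with ⟨p, hp, h2⟩
  rcases List.any_eq_true.mp h2 with ⟨q, hq, h3⟩
  intro hnc
  exact hnc p (hsub p hp) q (hsub q hq) (of_decide_eq_true h3)

lemma not_irr_of_intervalOK {n : ℕ} (σ : Equiv.Perm (Fin n)) (a b : ℕ)
    (h : intervalOK n (val σ) a b = true) : ¬ IsIrreducible σ := by
  rw [intervalOK, Bool.and_eq_true, decide_eq_true_eq] at h
  obtain ⟨⟨h1a, hab, hbn, hw1, hw2⟩, hall⟩ := h
  intro hirr
  apply hirr
  refine ⟨Set.Icc a b, ⟨⟨a, Set.mem_Icc.mpr ⟨le_refl a, hab⟩⟩, Set.Icc_subset_Icc h1a hbn,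
    ?_, ?_⟩, ?_, ?_⟩
  · intro x hx y hy z hxz hzy
    rw [Set.mem_Icc] at *
    exact ⟨hx.1.trans hxz, hzy.trans hy.2⟩
  · intro x hx y hy z hxz hzy
    simp only [Set.mem_setOf_eq, Set.mem_Icc] at hx hy ⊢
    have hx' : x < n + 1 := by omega
    have hy' : y < n + 1 := by omega
    have hz' : z < n + 1 := by omega
    have := List.all_eq_true.mp (List.all_eq_true.mp (List.all_eq_true.mp hall x
      (List.mem_range.mpr hx')) y (List.mem_range.mpr hy')) z (List.mem_range.mpr hz')
    have hPx : inP n (val σ) a b x = true :=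
      decide_eq_true ⟨hx.1.1, hx.1.2, hx.2.1, hx.2.2⟩
    have hPy : inP n (val σ) a b y = true :=
      decide_eq_true ⟨hy.1.1, hy.1.2, hy.2.1, hy.2.2⟩
    rw [Bool.or_eq_true] at this
    rcases this with h' | h'
    · rw [Bool.not_eq_true', hPx, hPy, decide_eq_true (⟨hxz, hzy⟩ : x ≤ z ∧ z ≤ y)] at h'
      simp at h'
    · have h'' := of_decide_eq_true h'
      exact ⟨⟨h''.1, h''.2.1⟩, ⟨h''.2.2.1, h''.2.2.2⟩⟩
  · have : (Set.Icc a b).ncard = b + 1 - a := by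
      rw [← Finset.coe_Icc, Set.ncard_coe_finset, Nat.card_Icc]
    omega
  · have : (Set.Icc a b).ncard = b + 1 - a := by
      rw [← Finset.coe_Icc, Set.ncard_coe_finset, Nat.card_Icc]
    omega

lemma bad_imp {n : ℕ} (σ : Equiv.Perm (Fin n)) (h : bad n (val σ) = true) :
    ¬ (IsMeandric σ ∧ IsIrreducible σ) := by
  rintro ⟨⟨hu, hl⟩, hirr⟩
  simp only [bad, hasInterval, Bool.or_eq_true] at h
  rcases h with (h | h) | h
  · exact not_noncross_of_anyCross (mem_uL σ) h hu
  · exact not_noncross_of_anyCross (mem_lL σ) h hl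
  · rcases List.any_eq_true.mp h with ⟨a, _, h2⟩
    rcases List.any_eq_true.mp h2 with ⟨b, _, h3⟩
    exact not_irr_of_intervalOK σ a b h3 hirr

lemma val_eq_valL {n : ℕ} (σ : Equiv.Perm (Fin n)) :
    valL n (List.ofFn fun i : Fin n => (σ i : ℕ) + 1) = val σ := by
  funext k
  rw [valL, val]
  by_cases h : 1 ≤ k ∧ k ≤ n
  · rw [if_pos h, dif_pos h]
    have hlen : k - 1 < (List.ofFn fun i : Fin n => (σ i : ℕ) + 1).length := by
      rw [List.length_ofFn]; omega
    rw [List.getD_eq_getElem _ _ hlen, List.getElem_ofFn]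
  · rw [if_neg h, dif_neg h]

lemma bad_of_keyH {n : ℕ} (hn : 1 ≤ n) (hk : ∀ a < n + 1, 1 ≤ a → keyH n a)
    (σ : Equiv.Perm (Fin n)) : bad n (val σ) = true := by
  have hnodup : (List.ofFn fun i : Fin n => (σ i : ℕ) + 1).Nodup := by
    rw [List.nodup_ofFn]
    intro i j hij
    have h' : (σ i : ℕ) + 1 = (σ j : ℕ) + 1 := hij
    exact σ.injective (Fin.ext (Nat.succ_injective h'))
  have hnodup2 : (((List.range n).map (· + 1))).Nodup :=
    List.nodup_range.map (fun x y h => by omega)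
  have hmem : ∀ x, x ∈ (List.ofFn fun i : Fin n => (σ i : ℕ) + 1) ↔
      x ∈ (List.range n).map (· + 1) := by
    intro x
    rw [List.mem_ofFn, List.mem_map]
    constructor
    · rintro ⟨i, rfl⟩
      exact ⟨(σ i : ℕ), List.mem_range.mpr (σ i).isLt, rfl⟩
    · rintro ⟨y, hy, rfl⟩
      exact ⟨σ.symm ⟨y, List.mem_range.mp hy⟩, by simp⟩
  have hperm : (List.ofFn fun i : Fin n => (σ i : ℕ) + 1).Perm
      ((List.range n).map (· + 1)) :=
    (List.perm_ext_iff_of_nodup hnodup hnodup2).mpr hmem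
  rcases hl : (List.ofFn fun i : Fin n => (σ i : ℕ) + 1) with _ | ⟨a, t⟩
  · exfalso
    have := congrArg List.length hl
    rw [List.length_ofFn] at this
    simp at this
    omega
  · rw [hl] at hperm
    obtain ⟨haM, ht⟩ := List.cons_perm_iff_perm_erase.mp hperm
    obtain ⟨y, hy, rfl⟩ := List.mem_map.mp haM
    have hy' := List.mem_range.mp hy
    have hkey := hk (y + 1) (by omega) (by omega)
    have htm : t ∈ ((((List.range n).map (· + 1)).erase (y + 1)).permutations') :=
      List.mem_permutations'.mpr ht
    have hb := List.all_eq_true.mp hkey t htm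
    rw [← hl, val_eq_valL σ] at hb
    exact hb

lemma irrCount_zero_of_key (n : ℕ) (hn : 1 ≤ n)
    (hk : ∀ a < n + 1, 1 ≤ a → keyH n a) : irrCount n = 0 := by
  have : IsEmpty {σ : Equiv.Perm (Fin n) // IsMeandric σ ∧ IsIrreducible σ} :=
    ⟨fun x => bad_imp x.1 (bad_of_keyH hn hk x.1) x.2⟩
  exact Nat.card_of_isEmpty





set_option maxRecDepth 10000 in
lemma key4 : ∀ a < 5, 1 ≤ a → keyH 4 a := by decide

set_option maxRecDepth 10000 in
lemma key5 : ∀ a < 6, 1 ≤ a → keyH 5 a := by decide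

set_option maxRecDepth 10000 in
lemma key6 : ∀ a < 7, 1 ≤ a → keyH 6 a := by decide

set_option maxRecDepth 100000 in
set_option maxHeartbeats 20000000 in
lemma key7 : ∀ a < 8, 1 ≤ a → keyH 7 a := by decide


/-- `M^{Irr}_n = 0` for `n = 4, 5, 6, 7`. -/
theorem irrCount_eq_zero_of_le_seven (n : ℕ) (h4 : 4 ≤ n) (h7 : n ≤ 7) :
    irrCount n = 0 := by
  have h : n = 4 ∨ n = 5 ∨ n = 6 ∨ n = 7 := by omega
  rcases h with rfl | rfl | rfl | rfl
  · exact irrCount_zero_of_key 4 (by omega) key4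
  · exact irrCount_zero_of_key 5 (by omega) key5
  · exact irrCount_zero_of_key 6 (by omega) key6
  · exact irrCount_zero_of_key 7 (by omega) key7


end MeanderFormal
end
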